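/- Fix n ≥ 1 and let D, D* be the maps on MvPolynomial (Fin (n+1)) ℚ given by D(S) = ∑_{i=1}^{n} i·a_{i−1}·(∂S/∂a_i) and D*(S) = ∑_{i=0}^{n−1} (n−i)·a_{i+1}·(∂S/∂a_i). Let p be homogeneous of degree d_p and weighted homogeneous of weight m_p for w(a_i)=i with D(p)=0, and similarly q with d_q, m_q; set ω_p = n·d_p − 2m_p and ω_q = n·d_q − 2m_q (assume 2m_p ≤ n·d_p and 2m_q ≤ n·d_q), and let r ≤ min(ω_p, ω_q). Then the r-th semi-transvectant [p,q]^r := ∑_{i=0}^{r} (−1)^i · C(r,i) · ((D*)^[i](p) / [ω_p]_i) · ((D*)^[r−i](q) / [ω_q]_{r−i}) is homogeneous of degree d_p + d_q and weighted homogeneous of weight m_p + m_q + r for w(a_i)=i; equivalently, its isobaric weight is ω_p + ω_q − 2r. -/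
import Mathlib

private lemma weight_single_one {σ : Type*} (w : σ → ℕ) (i : σ) :
    Finsupp.weight w (Finsupp.single i 1) = w i := by
  simp [Finsupp.weight_apply, Finsupp.sum_single_index]

private lemma smul_wh {σ : Type*} {w : σ → ℕ} {φ : MvPolynomial σ ℚ} {m : ℕ}
    (h : φ.IsWeightedHomogeneous w m) (c : ℚ) :
    (c • φ).IsWeightedHomogeneous w m := by
  rw [← MvPolynomial.mem_weightedHomogeneousSubmodule] at h ⊢
  exact Submodule.smul_mem _ c h

private lemma X_mul_pderiv_wh {σ : Type*} [DecidableEq σ] (w : σ → ℕ) (i j : σ) (k : ℕ)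
    (h : w j = w i + k) {S : MvPolynomial σ ℚ} {m : ℕ}
    (hS : S.IsWeightedHomogeneous w m) :
    (MvPolynomial.X j * MvPolynomial.pderiv i S).IsWeightedHomogeneous w (m + k) := by
  conv_lhs => rw [MvPolynomial.as_sum S]
  rw [map_sum, Finset.mul_sum]
  apply MvPolynomial.IsWeightedHomogeneous.sum
  intro d hd
  rw [MvPolynomial.pderiv_monomial]
  by_cases hdi : d i = 0
  · simp only [hdi, Nat.cast_zero, mul_zero, MvPolynomial.monomial_zero, mul_zero]
    exact MvPolynomial.isWeightedHomogeneous_zero _ _ _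
  · rw [MvPolynomial.X, MvPolynomial.monomial_mul, one_mul]
    apply MvPolynomial.isWeightedHomogeneous_monomial
    have hdm : Finsupp.weight w d = m := hS (MvPolynomial.mem_support_iff.mp hd)
    have hle : Finsupp.single i 1 ≤ d := by
      rw [Finsupp.single_le_iff]; omega
    have hde : (d - Finsupp.single i 1) + Finsupp.single i 1 = d :=
      tsub_add_cancel_of_le hle
    have h1 : Finsupp.weight w (d - Finsupp.single i 1) + w i = m := by
      rw [← weight_single_one w i, ← map_add, hde, hdm]
    rw [map_add, weight_single_one]
    omega

private lemma pow_wh {n : ℕ}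
    (Dstar : MvPolynomial (Fin (n + 1)) ℚ → MvPolynomial (Fin (n + 1)) ℚ)
    (hDstar : ∀ S, Dstar S = ∑ j : Fin n, ((n - (j : ℕ) : ℕ) : ℚ) •
        (MvPolynomial.X j.succ * MvPolynomial.pderiv j.castSucc S))
    {p : MvPolynomial (Fin (n + 1)) ℚ} {d m : ℕ}
    (hhom : p.IsHomogeneous d)
    (hiso : p.IsWeightedHomogeneous (fun i : Fin (n + 1) => (i : ℕ)) m) (i : ℕ) :
    (Dstar^[i] p).IsHomogeneous d ∧
      (Dstar^[i] p).IsWeightedHomogeneous (fun i : Fin (n + 1) => (i : ℕ)) (m + i) := by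
  induction i with
  | zero => simpa using ⟨hhom, hiso⟩
  | succ i ih =>
    rw [Function.iterate_succ_apply', hDstar]
    constructor
    · apply MvPolynomial.IsWeightedHomogeneous.sum
      intro j _
      apply smul_wh
      have := X_mul_pderiv_wh (1 : Fin (n+1) → ℕ) j.castSucc j.succ 0 (by simp) ih.1
      simpa using this
    · have : m + (i + 1) = (m + i) + 1 := by omega
      rw [this]
      apply MvPolynomial.IsWeightedHomogeneous.sum
      intro j _
      apply smul_wh
      exact X_mul_pderiv_wh _ j.castSucc j.succ 1 (by simp) ih.2



/-- The `r`-th semi-transvectant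
`[p,q]^r = ∑_{i=0}^{r} (−1)^i C(r,i) ((D*)^[i] p / [ω_p]_i) ((D*)^[r−i] q / [ω_q]_{r−i})`
of semi-invariants `p, q` (homogeneous of degrees `d_p, d_q` and weighted homogeneous
of weights `m_p, m_q` for `w(a_i) = i`, with isobaric weights `ω_p = n·d_p − 2m_p`,
`ω_q = n·d_q − 2m_q` and `r ≤ min(ω_p, ω_q)`) is homogeneous of degree `d_p + d_q` and
weighted homogeneous of weight `m_p + m_q + r`; i.e. its isobaric weight is
`ω_p + ω_q − 2r`. -/
theorem semi_transvectant_homogeneous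
    (n : ℕ) (hn : 1 ≤ n)
    (Dstar : MvPolynomial (Fin (n + 1)) ℚ → MvPolynomial (Fin (n + 1)) ℚ)
    (hDstar : ∀ S, Dstar S = ∑ j : Fin n, ((n - (j : ℕ) : ℕ) : ℚ) •
        (MvPolynomial.X j.succ * MvPolynomial.pderiv j.castSucc S))
    (p q : MvPolynomial (Fin (n + 1)) ℚ) (dp mp dq mq r : ℕ)
    (hpsemi : (∑ j : Fin n, (((j : ℕ) + 1 : ℚ)) •
        (MvPolynomial.X j.castSucc * MvPolynomial.pderiv j.succ p)) = 0)
    (hqsemi : (∑ j : Fin n, (((j : ℕ) + 1 : ℚ)) •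
        (MvPolynomial.X j.castSucc * MvPolynomial.pderiv j.succ q)) = 0)
    (hphom : MvPolynomial.IsHomogeneous p dp)
    (hpiso : MvPolynomial.IsWeightedHomogeneous (fun i : Fin (n + 1) => (i : ℕ)) p mp)
    (hqhom : MvPolynomial.IsHomogeneous q dq)
    (hqiso : MvPolynomial.IsWeightedHomogeneous (fun i : Fin (n + 1) => (i : ℕ)) q mq)
    (hmp : 2 * mp ≤ n * dp) (hmq : 2 * mq ≤ n * dq)
    (hr : r ≤ min (n * dp - 2 * mp) (n * dq - 2 * mq)) :
    MvPolynomial.IsHomogeneous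
      (∑ i ∈ Finset.range (r + 1),
        (((-1 : ℚ) ^ i * (r.choose i)) /
            ((Nat.descFactorial (n * dp - 2 * mp) i : ℚ) *
              (Nat.descFactorial (n * dq - 2 * mq) (r - i) : ℚ))) •
          (Dstar^[i] p * Dstar^[r - i] q)) (dp + dq) ∧
    MvPolynomial.IsWeightedHomogeneous (fun i : Fin (n + 1) => (i : ℕ))
      (∑ i ∈ Finset.range (r + 1),
        (((-1 : ℚ) ^ i * (r.choose i)) /
            ((Nat.descFactorial (n * dp - 2 * mp) i : ℚ) *
              (Nat.descFactorial (n * dq - 2 * mq) (r - i) : ℚ))) •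
          (Dstar^[i] p * Dstar^[r - i] q)) (mp + mq + r) := by
  constructor
  · apply MvPolynomial.IsWeightedHomogeneous.sum
    intro i _
    exact smul_wh (((pow_wh Dstar hDstar hphom hpiso i).1.mul
      (pow_wh Dstar hDstar hqhom hqiso (r - i)).1)) _
  · apply MvPolynomial.IsWeightedHomogeneous.sum
    intro i hi
    have hir : i ≤ r := by
      simpa using Finset.mem_range_succ_iff.mp hi
    have heq : (mp + i) + (mq + (r - i)) = mp + mq + r := by omega
    have := ((pow_wh Dstar hDstar hphom hpiso i).2.mul
      (pow_wh Dstar hDstar hqhom hqiso (r - i)).2)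
    rw [heq] at this
    exact smul_wh this _
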